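/- Let z ∈ ℂ with Im z > 0 and define U(z) := ∫_{−√2}^{√2} (1/π)·√(2 − x²)/(x − z) dx. Then U(z)² + 2z·U(z) + 2 = 0 and Im U(z) > 0; in other words, U(z) = −z + w where w is the unique square root of z² − 2 with Im(−z + w) > 0. -/

import Mathlib

open Complex Real Set intervalIntegral

open Complex Real Set

lemma real_w (R I : ℝ) (hpos : 0 < Real.sqrt (R ^ 2 + I ^ 2) + R) :
    ∃ p q : ℝ, 0 < p ∧ p ^ 2 - q ^ 2 = R ∧ 2 * (p * q) = I ∧
      2 * p ^ 2 = Real.sqrt (R ^ 2 + I ^ 2) + R := by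
  set A := Real.sqrt (R ^ 2 + I ^ 2) with hA
  have hA2 : A ^ 2 = R ^ 2 + I ^ 2 := Real.sq_sqrt (by positivity)
  have hA0 : 0 ≤ A := Real.sqrt_nonneg _
  have hp0 : 0 < Real.sqrt ((A + R) / 2) := Real.sqrt_pos.2 (by linarith)
  have hp2 : Real.sqrt ((A + R) / 2) ^ 2 = (A + R) / 2 := Real.sq_sqrt (by linarith)
  set p := Real.sqrt ((A + R) / 2)
  refine ⟨p, I / (2 * p), hp0, ?_, ?_, by linarith⟩
  · field_simp
    nlinarith [hp2, hA2, hp0]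
  · field_simp

lemma semicircle_w (z : ℂ) (hb : 0 < z.im) :
    ∃ w : ℂ, w ^ 2 = 2 - z ^ 2 ∧ z.im < w.re := by
  obtain ⟨R, hRdef⟩ : ∃ R, R = (2 - z ^ 2).re := ⟨_, rfl⟩
  obtain ⟨I, hIdef⟩ : ∃ I, I = (2 - z ^ 2).im := ⟨_, rfl⟩
  obtain ⟨A, hAdef⟩ : ∃ A, A = Real.sqrt (R ^ 2 + I ^ 2) := ⟨_, rfl⟩
  have hR : R = 2 - z.re ^ 2 + z.im ^ 2 := by
    rw [hRdef]; simp [pow_two, Complex.mul_re]; ring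
  have hI : I = -(2 * z.re * z.im) := by
    rw [hIdef]; simp [pow_two, Complex.mul_im]; ring
  have hA2 : A ^ 2 = R ^ 2 + I ^ 2 := by rw [hAdef]; exact Real.sq_sqrt (by positivity)
  have hA0 : 0 ≤ A := hAdef ▸ Real.sqrt_nonneg _
  have hdiff : A ^ 2 = (z.re ^ 2 + z.im ^ 2 - 2) ^ 2 + 8 * z.im ^ 2 := by
    rw [hA2, hR, hI]; ring
  have hAgt : z.re ^ 2 + z.im ^ 2 - 2 < A := by
    nlinarith [hdiff, hA0, mul_pos hb hb, sq_nonneg (A - (z.re ^ 2 + z.im ^ 2 - 2)),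
      sq_nonneg (A + (z.re ^ 2 + z.im ^ 2 - 2))]
  have hpos : 0 < Real.sqrt (R ^ 2 + I ^ 2) + R := by
    rw [← hAdef]; nlinarith [hAgt, hR, pow_pos hb 2]
  obtain ⟨p, q, hp0, hre, him, hp2⟩ := real_w R I hpos
  rw [← hAdef] at hp2
  refine ⟨(p : ℂ) + (q : ℂ) * Complex.I, ?_, ?_⟩
  · rw [Complex.ext_iff]
    rw [hR] at hre
    rw [hI] at him
    constructor
    · simp [pow_two, Complex.mul_re, Complex.mul_im, Complex.sub_re]
      linear_combination hre
    · simp [pow_two, Complex.mul_re, Complex.mul_im, Complex.sub_im]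
      linear_combination him
  · have hwre : ((p : ℂ) + (q : ℂ) * Complex.I).re = p := by simp
    rw [hwre]
    have h2 : 2 * z.im ^ 2 < 2 * p ^ 2 := by rw [hp2]; linarith [hAgt, hR]
    nlinarith [hp0, hb]

lemma key_pos (a b p q x s : ℝ) (hb : 0 < b) (hp : 0 < p) (hs : 0 < s)
    (hx2 : x ^ 2 < 2) (hs2 : s ^ 2 = 2 - x ^ 2)
    (hpq : p * q = -(a * b)) (hre : p ^ 2 - q ^ 2 = 2 - a ^ 2 + b ^ 2) :
    0 < (q * s - b * x) * (x - a) + b * (2 - a * x + p * s) := by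
  have hkey : a * x - p * s < p ^ 2 + a ^ 2 := by
    rcases le_or_gt 2 (a ^ 2) with h | h
    · nlinarith [mul_pos hp hs, sq_nonneg (a - x)]
    · nlinarith [mul_pos hp hs, sq_nonneg (a - x), sq_nonneg q, sq_nonneg (a + x)]
  have hid : p * ((q * s - b * x) * (x - a) + b * (2 - a * x + p * s))
      = s * b * (p ^ 2 + a ^ 2 - a * x + p * s) := by
    linear_combination s * (x - a) * hpq - p * b * hs2
  nlinarith [mul_pos (mul_pos hs hb) (show (0:ℝ) < p ^ 2 + a ^ 2 - a * x + p * s by linarith),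
    hp, hid]

lemma div_im' (u v : ℂ) : (u / v).im = (u.im * v.re - u.re * v.im) / Complex.normSq v := by
  rw [div_eq_mul_inv, Complex.mul_im, Complex.inv_re, Complex.inv_im]
  ring

lemma div_sq_div (a n d : ℂ) (hd : d ≠ 0) (hn : n ≠ 0) :
    a / d ^ 2 / (n / d) = a / (d * n) := by
  field_simp

/-- the Stieltjes transform of the semicircle law,
`U = ∫_{-√2}^{√2} (1/π)√(2-x²)/(x - z) dx` for `Im z > 0`, satisfies
`U² + 2zU + 2 = 0` and `Im U > 0`; in other words, `U = -z + w` where `w` is the unique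
square root of `z² - 2` with `Im(-z + w) > 0`. -/
theorem stmt_17 (z : ℂ) (hz : 0 < z.im)
    (U : ℂ)
    (hU : U = ∫ x in (-Real.sqrt 2)..Real.sqrt 2,
      (((1 / Real.pi) * Real.sqrt (2 - x ^ 2) : ℝ) : ℂ) / ((x : ℂ) - z)) :
    U ^ 2 + 2 * z * U + 2 = 0 ∧
    0 < U.im ∧
    ∀ w : ℂ, w ^ 2 = z ^ 2 - 2 → 0 < (-z + w).im → U = -z + w := by
  obtain ⟨w, hw2, hwre⟩ := semicircle_w z hz
  have hp : 0 < w.re := lt_trans hz hwre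
  have hpq : w.re * w.im = -(z.re * z.im) := by
    have h := congrArg Complex.im hw2
    rw [pow_two, Complex.mul_im] at h
    have h2 : (2 - z ^ 2).im = -(2 * z.re * z.im) := by
      simp [pow_two, Complex.mul_im]; ring
    rw [h2] at h; linarith
  have hre2 : w.re ^ 2 - w.im ^ 2 = 2 - z.re ^ 2 + z.im ^ 2 := by
    have h := congrArg Complex.re hw2
    rw [pow_two, Complex.mul_re] at h
    have h2 : (2 - z ^ 2).re = 2 - z.re ^ 2 + z.im ^ 2 := by
      simp [pow_two, Complex.mul_re]; ring
    rw [h2] at h; nlinarith [h]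
  have hr0 : (0:ℝ) < Real.sqrt 2 := Real.sqrt_pos.2 (by norm_num)
  have hr2 : Real.sqrt 2 ^ 2 = 2 := Real.sq_sqrt (by norm_num)
  have hrC : ((Real.sqrt 2 : ℝ) : ℂ) ^ 2 = 2 := by
    rw [← Complex.ofReal_pow, hr2]; norm_num
  have hD : ∀ x : ℝ, (x : ℂ) - z ≠ 0 := by
    intro x h
    have h1 : ((x : ℂ) - z).im = 0 := by rw [h]; rfl
    simp [Complex.sub_im] at h1
    linarith [hz, h1]
  have hπ : (Real.pi : ℂ) ≠ 0 := by
    simpa using Real.pi_ne_zero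
  set N : ℝ → ℂ := fun x => 2 - z * (x : ℂ) + w * (Real.sqrt (2 - x ^ 2) : ℝ) with hNdef
  set Q : ℝ → ℂ := fun x => N x / ((x : ℂ) - z) with hQdef
  set F : ℝ → ℂ := fun x => (Real.pi : ℂ)⁻¹ *
      ((Real.sqrt (2 - x ^ 2) : ℝ) - z * (Real.arcsin (x / Real.sqrt 2) : ℝ)
        - w * Complex.log (Q x)) with hFdef
  -- basic facts about points in the open interval
  have hx2 : ∀ x ∈ Ioo (-Real.sqrt 2) (Real.sqrt 2), x ^ 2 < 2 := by
    intro x hx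
    have := sq_lt_sq' hx.1 hx.2
    rwa [hr2] at this
  have hspos : ∀ x : ℝ, x ^ 2 < 2 → 0 < Real.sqrt (2 - x ^ 2) := by
    intro x hx; exact Real.sqrt_pos.2 (by linarith)
  have hssq : ∀ x : ℝ, x ^ 2 < 2 → Real.sqrt (2 - x ^ 2) ^ 2 = 2 - x ^ 2 := by
    intro x hx; exact Real.sq_sqrt (by linarith)
  -- imaginary part of Q is positive inside
  have hQim : ∀ x : ℝ, x ^ 2 < 2 → 0 < (Q x).im := by
    intro x hx
    have hs := hspos x hx
    have hs2 := hssq x hx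
    have hNre : (N x).re = 2 - z.re * x + w.re * Real.sqrt (2 - x ^ 2) := by
      rw [hNdef]; simp [Complex.mul_re]
    have hNim : (N x).im = -(z.im * x) + w.im * Real.sqrt (2 - x ^ 2) := by
      rw [hNdef]; simp [Complex.mul_im]
    have hDre : ((x : ℂ) - z).re = x - z.re := by simp
    have hDim : ((x : ℂ) - z).im = -z.im := by simp
    rw [hQdef]
    rw [div_im' (N x) ((x : ℂ) - z), hNre, hNim, hDre, hDim]
    apply div_pos
    · have := key_pos z.re z.im w.re w.im x (Real.sqrt (2 - x ^ 2)) hz hp hs hx hs2 hpq hre2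
      nlinarith [this]
    · exact Complex.normSq_pos.2 (hD x)
  have hQne : ∀ x : ℝ, x ^ 2 < 2 → Q x ∈ Complex.slitPlane := by
    intro x hx
    exact Complex.mem_slitPlane_iff.2 (Or.inr (ne_of_gt (hQim x hx)))
  -- endpoint values of Q
  have hsr : Real.sqrt (2 - Real.sqrt 2 ^ 2) = 0 := by rw [hr2]; simp
  have hsmr : Real.sqrt (2 - (-Real.sqrt 2) ^ 2) = 0 := by
    rw [neg_pow, hr2]; norm_num
  have hQr : Q (Real.sqrt 2) = ((Real.sqrt 2 : ℝ) : ℂ) := by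
    rw [hQdef, hNdef]
    simp only [hsr, Complex.ofReal_zero, mul_zero, add_zero]
    rw [div_eq_iff (hD _)]
    linear_combination -hrC
  have hQmr : Q (-Real.sqrt 2) = -((Real.sqrt 2 : ℝ) : ℂ) := by
    rw [hQdef, hNdef]
    simp only [hsmr, Complex.ofReal_zero, mul_zero, add_zero]
    rw [div_eq_iff (hD _)]
    push_cast
    linear_combination -hrC
  -- continuity of Q
  have hNcont : Continuous N := by
    rw [hNdef]
    apply Continuous.add
    · exact continuous_const.sub (continuous_const.mul Complex.continuous_ofReal)
    · exact continuous_const.mul (Complex.continuous_ofReal.comp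
        (Real.continuous_sqrt.comp (continuous_const.sub (continuous_pow 2))))
  have hQcont : Continuous Q := by
    rw [hQdef]
    exact hNcont.div (Complex.continuous_ofReal.sub continuous_const) hD
  -- Q maps the closed interval into the closed upper half plane
  have hQmaps : ∀ x ∈ Icc (-Real.sqrt 2) (Real.sqrt 2), 0 ≤ (Q x).im := by
    intro x hx
    rcases eq_or_lt_of_le hx.1 with h | h1
    · rw [← h, hQmr]; simp
    rcases eq_or_lt_of_le hx.2 with h | h2
    · rw [h, hQr]; simp
    · exact le_of_lt (hQim x (hx2 x ⟨h1, h2⟩))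
  -- continuity of F on the closed interval
  have hlogcont : ContinuousOn (fun x => Complex.log (Q x)) (Icc (-Real.sqrt 2) (Real.sqrt 2)) := by
    intro x hx
    rcases eq_or_lt_of_le hx.1 with h | h1
    · -- x = -√2
      have hlog : ContinuousWithinAt Complex.log {v : ℂ | 0 ≤ v.im} (Q x) := by
        rw [← h, hQmr]
        apply Complex.continuousWithinAt_log_of_re_neg_of_im_zero <;> simp [hr0]
      exact hlog.comp hQcont.continuousWithinAt (fun y hy => hQmaps y hy)
    · have hslit : Q x ∈ Complex.slitPlane := by
        rcases eq_or_lt_of_le hx.2 with h | h2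
        · rw [h, hQr]
          exact Complex.mem_slitPlane_iff.2 (Or.inl (by simpa using hr0))
        · exact hQne x (hx2 x ⟨h1, h2⟩)
      exact ((continuousAt_clog hslit).comp hQcont.continuousAt).continuousWithinAt
  have hcont : ContinuousOn F (Icc (-Real.sqrt 2) (Real.sqrt 2)) := by
    rw [hFdef]
    apply ContinuousOn.mul continuousOn_const
    apply ContinuousOn.sub
    · apply ContinuousOn.sub
      · exact (Complex.continuous_ofReal.comp
          (Real.continuous_sqrt.comp (continuous_const.sub (continuous_pow 2)))).continuousOn
      · exact continuousOn_const.mul (Complex.continuous_ofReal.comp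
          (Real.continuous_arcsin.comp (continuous_id.div_const _))).continuousOn
    · exact continuousOn_const.mul hlogcont
  -- derivative of F inside
  have hderiv : ∀ x ∈ Ioo (-Real.sqrt 2) (Real.sqrt 2),
      HasDerivAt F ((((1 / Real.pi) * Real.sqrt (2 - x ^ 2) : ℝ) : ℂ) / ((x : ℂ) - z)) x := by
    intro x hx
    have hx2' := hx2 x hx
    have hs := hspos x hx2'
    have hs2 := hssq x hx2'
    set s := Real.sqrt (2 - x ^ 2) with hsdef
    have hsne : s ≠ 0 := ne_of_gt hs
    have hsCne : (s : ℂ) ≠ 0 := by exact_mod_cast hsne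
    have hNne : N x ≠ 0 := by
      intro h
      have := hQim x hx2'
      rw [hQdef] at this
      simp only [h] at this
      simp at this
    have hQxne : Q x ≠ 0 := by
      intro h
      have := hQim x hx2'
      rw [h] at this; simp at this
    -- real derivatives
    have hinner : HasDerivAt (fun y : ℝ => 2 - y ^ 2) (-(2 * x)) x := by
      simpa using (hasDerivAt_pow 2 x).const_sub 2
    have hsd : HasDerivAt (fun y : ℝ => Real.sqrt (2 - y ^ 2)) (-x / s) x := by
      have h := (Real.hasDerivAt_sqrt (show 2 - x ^ 2 ≠ 0 by linarith)).comp x hinner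
      refine h.congr_deriv ?_; symm
      rw [← hsdef]
      field_simp
    have hxd1 : x / Real.sqrt 2 ≠ -1 := by
      have : -1 < x / Real.sqrt 2 := by
        rw [lt_div_iff₀ hr0]; linarith [hx.1]
      linarith [this]
    have hxd2 : x / Real.sqrt 2 ≠ 1 := by
      have : x / Real.sqrt 2 < 1 := by
        rw [div_lt_one hr0]; exact hx.2
      linarith [this]
    have harc : HasDerivAt (fun y : ℝ => Real.arcsin (y / Real.sqrt 2)) (1 / s) x := by
      have h := (Real.hasDerivAt_arcsin hxd1 hxd2).comp x ((hasDerivAt_id x).div_const (Real.sqrt 2))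
      refine h.congr_deriv ?_; symm
      have h1 : 1 - (x / Real.sqrt 2) ^ 2 = (2 - x ^ 2) / 2 := by
        rw [div_pow, hr2]; ring
      have h2 : Real.sqrt (1 - (x / Real.sqrt 2) ^ 2) = s / Real.sqrt 2 := by
        rw [h1, hsdef, show (2 : ℝ) - x ^ 2 = (2 - x ^ 2) from rfl]
        rw [show ((2 : ℝ) - x ^ 2) / 2 = (2 - x ^ 2) / Real.sqrt 2 ^ 2 by rw [hr2]]
        rw [Real.sqrt_div (by linarith) _]
        rw [Real.sqrt_sq (le_of_lt hr0)]
      rw [h2]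
      field_simp
    -- complex versions
    have hsC : HasDerivAt (fun y : ℝ => ((Real.sqrt (2 - y ^ 2) : ℝ) : ℂ)) ((-x / s : ℝ) : ℂ) x :=
      hsd.ofReal_comp
    have harcC : HasDerivAt (fun y : ℝ => ((Real.arcsin (y / Real.sqrt 2) : ℝ) : ℂ))
        ((1 / s : ℝ) : ℂ) x := harc.ofReal_comp
    have hxC : HasDerivAt (fun y : ℝ => ((y : ℝ) : ℂ)) 1 x := by
      simpa using (hasDerivAt_id x).ofReal_comp
    have hNd : HasDerivAt N (-z + w * ((-x / s : ℝ) : ℂ)) x := by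
      rw [hNdef]
      have := ((hxC.const_mul z).const_sub 2).add (hsC.const_mul w)
      refine this.congr_deriv ?_
      ring
    have hDd : HasDerivAt (fun y : ℝ => (y : ℂ) - z) 1 x := hxC.sub_const z
    have hQd : HasDerivAt Q
        (((-z + w * ((-x / s : ℝ) : ℂ)) * ((x : ℂ) - z) - N x * 1) / ((x : ℂ) - z) ^ 2) x := by
      rw [hQdef]
      exact hNd.div hDd (hD x)
    have hlogd : HasDerivAt (fun y => Complex.log (Q y))
        ((((-z + w * ((-x / s : ℝ) : ℂ)) * ((x : ℂ) - z) - N x * 1) / ((x : ℂ) - z) ^ 2) / Q x)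
        x := hQd.clog_real (hQne x hx2')
    have hFd := ((hsC.sub (harcC.const_mul z)).sub (hlogd.const_mul w)).const_mul
      ((Real.pi : ℂ)⁻¹)
    rw [hFdef]
    have hs2C : ((s : ℝ) : ℂ) ^ 2 = 2 - (x : ℂ) ^ 2 := by
      rw [← Complex.ofReal_pow, hs2]; push_cast; ring
    have hxds : ((-x / s : ℝ) : ℂ) * (s : ℂ) = -(x : ℂ) := by
      push_cast
      exact div_mul_cancel₀ _ hsCne
    have h1s : ((1 / s : ℝ) : ℂ) * (s : ℂ) = 1 := by
      push_cast
      exact one_div_mul_cancel hsCne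
    have hA : ((-z + w * ((-x / s : ℝ) : ℂ)) * ((x : ℂ) - z) - N x * 1) * (s : ℂ)
        = ((-z * (s : ℂ) - w * (x : ℂ)) * ((x : ℂ) - z) - (s : ℂ) * N x) := by
      linear_combination (w * ((x : ℂ) - z)) * hxds
    have hlogval : ((-z + w * ((-x / s : ℝ) : ℂ)) * ((x : ℂ) - z) - N x * 1) / ((x : ℂ) - z) ^ 2
        / Q x = -w / ((s : ℂ) * ((x : ℂ) - z)) := by
      rw [hQdef]
      rw [div_sq_div _ _ _ (hD x) hNne]
      rw [div_eq_div_iff (mul_ne_zero (hD x) hNne) (mul_ne_zero hsCne (hD x))]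
      have h1 : ((-z + w * ((-x / s : ℝ) : ℂ)) * ((x : ℂ) - z) - N x * 1) * ((s : ℂ) * ((x : ℂ) - z))
          = (((-z * (s : ℂ) - w * (x : ℂ)) * ((x : ℂ) - z) - (s : ℂ) * N x)) * ((x : ℂ) - z) := by
        calc ((-z + w * ((-x / s : ℝ) : ℂ)) * ((x : ℂ) - z) - N x * 1) * ((s : ℂ) * ((x : ℂ) - z))
            = (((-z + w * ((-x / s : ℝ) : ℂ)) * ((x : ℂ) - z) - N x * 1) * (s : ℂ))
              * ((x : ℂ) - z) := by ring
          _ = _ := by rw [hA]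
      rw [h1]
      simp only [hNdef]
      linear_combination ((s : ℂ) * ((x : ℂ) - z)) * hw2 - (w * ((x : ℂ) - z)) * hs2C
    refine hFd.congr_deriv ?_; symm
    rw [hlogval]
    have e2 : (-(x : ℂ) - z) * ((x : ℂ) - z) + w ^ 2 = ((s : ℝ) : ℂ) ^ 2 := by
      linear_combination hw2 - hs2C
    have hww : (-w / ((s : ℂ) * ((x : ℂ) - z))) * ((s : ℂ) * ((x : ℂ) - z)) = -w :=
      div_mul_cancel₀ _ (mul_ne_zero hsCne (hD x))
    have e1 : ((-x / s : ℝ) : ℂ) - z * ((1 / s : ℝ) : ℂ) - w * (-w / ((s : ℂ) * ((x : ℂ) - z)))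
        = ((-(x : ℂ) - z) * ((x : ℂ) - z) + w ^ 2) / ((s : ℂ) * ((x : ℂ) - z)) := by
      rw [eq_div_iff (mul_ne_zero hsCne (hD x))]
      linear_combination ((x : ℂ) - z) * hxds - (z * ((x : ℂ) - z)) * h1s - w * hww
    rw [e1, e2, pow_two, mul_div_mul_left _ _ hsCne]
    rw [show (((1 / Real.pi) * s : ℝ) : ℂ) = (Real.pi : ℂ)⁻¹ * (s : ℂ) by push_cast; ring]
    rw [mul_div_assoc]
  -- integrability and FTC
  have hint : IntervalIntegrable
      (fun x : ℝ => (((1 / Real.pi) * Real.sqrt (2 - x ^ 2) : ℝ) : ℂ) / ((x : ℂ) - z))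
      MeasureTheory.volume (-Real.sqrt 2) (Real.sqrt 2) := by
    apply Continuous.intervalIntegrable
    apply Continuous.div
    · exact Complex.continuous_ofReal.comp
        (continuous_const.mul (Real.continuous_sqrt.comp (continuous_const.sub (continuous_pow 2))))
    · exact Complex.continuous_ofReal.sub continuous_const
    · exact hD
  have hftc := intervalIntegral.integral_eq_sub_of_hasDerivAt_of_le
      (by linarith [hr0] : -Real.sqrt 2 ≤ Real.sqrt 2) hcont hderiv hint
  rw [hftc] at hU
  -- endpoint values
  have harc1 : Real.arcsin (Real.sqrt 2 / Real.sqrt 2) = Real.pi / 2 := by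
    rw [div_self (ne_of_gt hr0), Real.arcsin_one]
  have harcm1 : Real.arcsin (-Real.sqrt 2 / Real.sqrt 2) = -(Real.pi / 2) := by
    rw [neg_div, div_self (ne_of_gt hr0), Real.arcsin_neg, Real.arcsin_one]
  have hlogr : Complex.log ((Real.sqrt 2 : ℝ) : ℂ) = ((Real.log (Real.sqrt 2) : ℝ) : ℂ) :=
    (Complex.ofReal_log (le_of_lt hr0)).symm
  have hlogmr : Complex.log (-((Real.sqrt 2 : ℝ) : ℂ))
      = ((Real.log (Real.sqrt 2) : ℝ) : ℂ) + Real.pi * Complex.I := by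
    apply Complex.ext
    · rw [Complex.log_re]
      simp [abs_of_pos hr0]
    · rw [Complex.log_im, show -((Real.sqrt 2 : ℝ) : ℂ) = ((-Real.sqrt 2 : ℝ) : ℂ) by push_cast; ring,
        Complex.arg_ofReal_of_neg (by linarith)]
      simp
  have hUval : U = -z + w * Complex.I := by
    rw [hU]
    simp only [hFdef]
    rw [hsr, hsmr, harc1, harcm1, hQr, hQmr, hlogr, hlogmr]
    push_cast
    field_simp
    ring
  have himU : 0 < U.im := by
    rw [hUval]
    simp only [Complex.add_im, Complex.neg_im, Complex.mul_im, Complex.I_re, Complex.I_im,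
      mul_zero, mul_one, zero_add]
    simpa using by linarith [hwre]
  refine ⟨?_, himU, ?_⟩
  · rw [hUval]
    linear_combination w ^ 2 * Complex.I_sq - hw2
  · intro w' hw'2 him'
    have hfac : (w * Complex.I - w') * (w * Complex.I + w') = 0 := by
      linear_combination w ^ 2 * Complex.I_sq - hw2 - hw'2
    rcases mul_eq_zero.1 hfac with h | h
    · rw [hUval, sub_eq_zero.1 h]
    · exfalso
      have hwI : w * Complex.I = -w' := add_eq_zero_iff_eq_neg.1 h
      have hU2 : U = -z - w' := by rw [hUval, hwI]; ring
      have h1 : U.im = -z.im - w'.im := by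
        rw [hU2]; simp [Complex.sub_im, Complex.neg_im]
      have h2 := him'
      simp only [Complex.add_im, Complex.neg_im] at h2
      rw [h1] at himU
      linarith [himU, h2, hz]
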